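/- (Majorant property) Let k ≥ 2 be an integer and ε' ∈ (0,1). There exist C_k > 0 and X_0 such that the following holds for all X ≥ X_0. Let n be an integer with X < n ≤ 2X, write n = n_1 n_2 where n_1 is the product of the prime-power factors p^{v_p(n)} of n over primes p ≤ X^{1/(log log X)^2} and n_2 is the product over primes p > X^{1/(log log X)^2}. If Ω(n) ≤ (1+ε') k log log X and Ω(n_2) ≤ 10 log log log X, then d_k(n) ≤ (log log X)^{C_k} · 𝑑̃_k(n). -/

import Mathlib

open Finset

/-- `dk k n` is the `k`-fold divisor function `d_k(n)`: the number of `k`-tuples of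
positive integers with product `n` (for `n ≥ 1`); `dk 0 n = 1_{n = 1}`. -/
def dk : ℕ → ℕ → ℕ
  | 0, n => if n = 1 then 1 else 0
  | k + 1, n => ∑ d ∈ n.divisors, dk k d

/-- `bigOmega n = Ω(n)`, the number of prime factors of `n` counted with multiplicity. -/
def bigOmega (n : ℕ) : ℕ := (Nat.primeFactorsList n).length

open ArithmeticFunction in
open scoped ArithmeticFunction.zeta in
lemma dk_eq_zeta_pow (k n : ℕ) : dk k n = (ζ ^ k : ArithmeticFunction ℕ) n := by
  induction k generalizing n with
  | zero => simp [dk, ArithmeticFunction.one_apply]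
  | succ k ih =>
    rw [pow_succ', ArithmeticFunction.zeta_mul_apply]
    simp [dk, ih]

open ArithmeticFunction in
open scoped ArithmeticFunction.zeta in
lemma dk_mul_coprime (k : ℕ) {a b : ℕ} (h : Nat.Coprime a b) :
    dk k (a * b) = dk k a * dk k b := by
  have hm : (ζ ^ k : ArithmeticFunction ℕ).IsMultiplicative := by
    induction k with
    | zero => simpa using ArithmeticFunction.isMultiplicative_one
    | succ k ih => rw [pow_succ]; exact ih.mul ArithmeticFunction.isMultiplicative_zeta
  simp [dk_eq_zeta_pow, hm.map_mul_of_coprime h]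

lemma dk_one (k : ℕ) : dk k 1 = 1 := by
  induction k with
  | zero => rfl
  | succ k ih => simp [dk, Nat.divisors_one, ih]

lemma bigOmega_eq (n : ℕ) : bigOmega n = ArithmeticFunction.cardFactors n := by
  rw [ArithmeticFunction.cardFactors_apply]; rfl

lemma bigOmega_mul {a b : ℕ} (ha : a ≠ 0) (hb : b ≠ 0) :
    bigOmega (a * b) = bigOmega a + bigOmega b := by
  simp [bigOmega_eq, ArithmeticFunction.cardFactors_mul ha hb]

lemma bigOmega_prime_pow {p : ℕ} (hp : p.Prime) (a : ℕ) : bigOmega (p ^ a) = a := by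
  simp [bigOmega_eq, ArithmeticFunction.cardFactors_apply_prime_pow hp]

lemma bigOmega_le_of_dvd {m n : ℕ} (hn : n ≠ 0) (h : m ∣ n) : bigOmega m ≤ bigOmega n := by
  obtain ⟨c, rfl⟩ := h
  have hm : m ≠ 0 := by rintro rfl; simp at hn
  have hc : c ≠ 0 := by rintro rfl; simp at hn
  rw [bigOmega_mul hm hc]; omega

lemma bigOmega_prod {ι : Type*} (s : Finset ι) (f : ι → ℕ) (h : ∀ i ∈ s, f i ≠ 0) :
    bigOmega (∏ i ∈ s, f i) = ∑ i ∈ s, bigOmega (f i) := by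
  induction s using Finset.cons_induction with
  | empty => simp [bigOmega]
  | cons a s ha ih =>
    rw [Finset.prod_cons, Finset.sum_cons,
      bigOmega_mul (h a (Finset.mem_cons_self a s)) (Finset.prod_ne_zero_iff.mpr
        (fun i hi => h i (Finset.mem_cons_of_mem hi))),
      ih (fun i hi => h i (Finset.mem_cons_of_mem hi))]

lemma sum_pow_le (k a : ℕ) : ∑ j ∈ Finset.range (a + 1), k ^ j ≤ (k + 1) ^ a := by
  induction a with
  | zero => simp
  | succ a ih =>
    rw [Finset.sum_range_succ, pow_succ]
    have : k ^ (a + 1) ≤ (k + 1) ^ a * k := by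
      rw [pow_succ]
      exact Nat.mul_le_mul_right k (Nat.pow_le_pow_left (Nat.le_succ k) a)
    calc ∑ j ∈ Finset.range (a+1), k ^ j + k ^ (a+1) ≤ (k+1)^a + (k+1)^a * k := by omega
    _ = (k+1)^a * (k+1) := by ring

lemma dk_prime_pow_le (k : ℕ) {p : ℕ} (hp : p.Prime) (a : ℕ) : dk k (p ^ a) ≤ k ^ a := by
  induction k generalizing a with
  | zero =>
    rcases Nat.eq_zero_or_pos a with rfl | ha
    · simp [dk]
    · have : p ^ a ≠ 1 := Nat.one_lt_pow ha.ne' hp.one_lt |>.ne'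
      simp [dk, this, hp.ne_one, ha.ne']
  | succ k ih =>
    show (∑ d ∈ (p ^ a).divisors, dk k d) ≤ (k + 1) ^ a
    rw [Nat.divisors_prime_pow hp, Finset.sum_map]
    calc (∑ j ∈ Finset.range (a + 1), dk k (p ^ j))
        ≤ ∑ j ∈ Finset.range (a + 1), k ^ j := Finset.sum_le_sum fun j _ => ih j
      _ ≤ (k + 1) ^ a := sum_pow_le k a

lemma dk_le_pow_bigOmega (k : ℕ) (n : ℕ) (hn : n ≠ 0) : dk k n ≤ k ^ bigOmega n := by
  induction n using Nat.recOnPrimePow with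
  | zero => simp at hn
  | one => simp [dk_one, bigOmega]
  | prime_pow_mul a p i hp hpa hi ih =>
    have ha : a ≠ 0 := by rintro rfl; simp at hn
    have hcop : Nat.Coprime (p ^ i) a := (hp.coprime_iff_not_dvd.mpr hpa).pow_left i
    rw [dk_mul_coprime k hcop, bigOmega_mul (pow_ne_zero i hp.pos.ne') ha,
      bigOmega_prime_pow hp, pow_add]
    exact Nat.mul_le_mul (dk_prime_pow_le k hp i) (ih ha)

/-- `Mval k X = M := X^(2k / log log X)`. -/
noncomputable def Mval (k : ℕ) (X : ℝ) : ℝ := X ^ ((2 * (k : ℝ)) / Real.log (Real.log X))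

/-- The modified divisor function
`𝑑̃_k(n) := 1_{(X, 2X]}(n) · ∑_{m ∣ n, m ≤ M, Ω(m) ≤ (1+ε')k log log X} d_{k−1}(m)`. -/
noncomputable def dtilde (k : ℕ) (ε' : ℝ) (X : ℝ) (n : ℕ) : ℝ :=
  (if X < (n : ℝ) ∧ (n : ℝ) ≤ 2 * X then 1 else 0) *
    ∑ m ∈ n.divisors.filter (fun m : ℕ => ((m : ℝ) ≤ Mval k X) ∧
        (bigOmega m : ℝ) ≤ (1 + ε') * k * Real.log (Real.log X)), (dk (k - 1) m : ℝ)

/-- `roughPart Y n` is the product of the prime-power factors `p^(v_p(n))` of `n` over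
primes `p > Y`. -/
noncomputable def roughPart (Y : ℝ) (n : ℕ) : ℕ :=
  ∏ p ∈ n.primeFactors.filter (fun p : ℕ => Y < (p : ℝ)), p ^ (n.factorization p)

/-- Majorant property: for `k ≥ 2`, `ε' ∈ (0,1)` there are `C_k > 0` and `X₀`
such that for all `X ≥ X₀` and integers `X < n ≤ 2X`, writing `n = n₁ n₂` with `n₂` the
rough part of `n` at `X^(1/(log log X)^2)`: if `Ω(n) ≤ (1+ε')k log log X` and
`Ω(n₂) ≤ 10 log log log X` then `d_k(n) ≤ (log log X)^(C_k) · 𝑑̃_k(n)`. -/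
theorem statement3 (k : ℕ) (hk : 2 ≤ k) (ε' : ℝ) (hε : ε' ∈ Set.Ioo (0 : ℝ) 1) :
    ∃ C : ℝ, 0 < C ∧ ∃ X₀ : ℝ, ∀ X : ℝ, X₀ ≤ X → ∀ n : ℕ,
      X < (n : ℝ) → (n : ℝ) ≤ 2 * X →
      (bigOmega n : ℝ) ≤ (1 + ε') * k * Real.log (Real.log X) →
      (bigOmega (roughPart (X ^ (1 / Real.log (Real.log X) ^ 2)) n) : ℝ) ≤
          10 * Real.log (Real.log (Real.log X)) →
      (dk k n : ℝ) ≤ Real.log (Real.log X) ^ C * dtilde k ε' X n := by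
  obtain ⟨hε0, hε1⟩ := hε
  have hk1 : (1:ℝ) < (k:ℝ) := by exact_mod_cast lt_of_lt_of_le one_lt_two hk
  have hlogk : 0 < Real.log k := Real.log_pos hk1
  refine ⟨10 * Real.log k, by positivity, Real.exp (Real.exp (Real.exp 1)), ?_⟩
  intro X hX n hXn hn2X hΩn hΩ2
  set L := Real.log (Real.log X) with hLdef
  set Y := X ^ (1 / L ^ 2) with hYdef
  set n₂ := roughPart Y n with hn₂def
  set S := n.primeFactors.filter (fun p : ℕ => ¬ Y < (p : ℝ)) with hSdef
  set n₁ := ∏ p ∈ S, p ^ n.factorization p with hn₁def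
  -- basic real bounds
  have hX0 : (0:ℝ) < X := lt_of_lt_of_le (Real.exp_pos _) hX
  have hX1 : (1:ℝ) < X := by
    refine lt_of_lt_of_le ?_ hX
    calc (1:ℝ) = Real.exp 0 := (Real.exp_zero).symm
      _ < Real.exp (Real.exp (Real.exp 1)) := Real.exp_lt_exp.mpr (Real.exp_pos _)
  have hlogX : Real.exp (Real.exp 1) ≤ Real.log X := (Real.le_log_iff_exp_le hX0).mpr hX
  have hlogX0 : 0 < Real.log X := lt_of_lt_of_le (Real.exp_pos _) hlogX
  have hL : Real.exp 1 ≤ L := (Real.le_log_iff_exp_le hlogX0).mpr hlogX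
  have hL1 : (1:ℝ) ≤ L := le_trans (Real.one_le_exp zero_le_one) hL
  have hL0 : (0:ℝ) < L := lt_of_lt_of_le one_pos hL1
  have hlogL : (1:ℝ) ≤ Real.log L := (Real.le_log_iff_exp_le hL0).mpr hL
  have hn0 : n ≠ 0 := by
    rintro rfl
    simp only [Nat.cast_zero] at hXn
    linarith
  -- decomposition
  have hprime : ∀ p ∈ n.primeFactors, (p ^ n.factorization p) ≠ 0 :=
    fun p hp => pow_ne_zero _ (Nat.prime_of_mem_primeFactors hp).pos.ne'
  have hsplit : n₂ * n₁ = n := by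
    rw [hn₂def, hn₁def, hSdef, roughPart, Finset.prod_filter_mul_prod_filter_not]
    conv_rhs => rw [← Nat.factorization_prod_pow_eq_self hn0]
    rfl
  have hn₁pos : 0 < n₁ := Finset.prod_pos fun p hp =>
    pow_pos (Nat.prime_of_mem_primeFactors (Finset.mem_filter.mp hp).1).pos _
  have hn₂pos : 0 < n₂ := by
    rw [hn₂def, roughPart]
    exact Finset.prod_pos fun p hp =>
      pow_pos (Nat.prime_of_mem_primeFactors (Finset.mem_filter.mp hp).1).pos _
  have hcop : Nat.Coprime n₂ n₁ := by
    rw [hn₂def, hn₁def, roughPart]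
    apply Nat.Coprime.prod_left
    intro p hp
    apply Nat.Coprime.prod_right
    intro q hq
    obtain ⟨hpmem, hpY⟩ := Finset.mem_filter.mp hp
    obtain ⟨hqmem, hqY⟩ := Finset.mem_filter.mp hq
    have hpp := Nat.prime_of_mem_primeFactors hpmem
    have hqp := Nat.prime_of_mem_primeFactors hqmem
    have hne : p ≠ q := by rintro rfl; exact hqY hpY
    exact Nat.Coprime.pow _ _ ((Nat.coprime_primes hpp hqp).mpr hne)
  have hΩsplit : bigOmega n = bigOmega n₂ + bigOmega n₁ := by
    rw [← hsplit, bigOmega_mul hn₂pos.ne' hn₁pos.ne']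
  have hΩ1n : bigOmega n₁ ≤ bigOmega n := by omega
  have hΩ1R : (bigOmega n₁ : ℝ) ≤ 2 * k * L := by
    have h1 : (bigOmega n₁ : ℝ) ≤ (bigOmega n : ℝ) := Nat.cast_le.mpr hΩ1n
    have h2 : (1 + ε') * k * L ≤ 2 * k * L := by
      have hk0 : (0:ℝ) ≤ (k:ℝ) := Nat.cast_nonneg k
      nlinarith
    linarith
  -- n₁ ≤ M
  have hΩn₁sum : bigOmega n₁ = ∑ p ∈ S, n.factorization p := by
    rw [hn₁def, bigOmega_prod S _ (fun p hp => hprime p (Finset.mem_filter.mp hp).1)]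
    exact Finset.sum_congr rfl fun p hp =>
      bigOmega_prime_pow (Nat.prime_of_mem_primeFactors (Finset.mem_filter.mp hp).1) _
  have hY1 : (0:ℝ) ≤ Y := by rw [hYdef]; positivity
  have hn₁M : (n₁ : ℝ) ≤ Mval k X := by
    have h1 : (n₁ : ℝ) ≤ Y ^ (bigOmega n₁) := by
      rw [hn₁def, hΩn₁sum]
      push_cast
      calc ∏ p ∈ S, (p:ℝ) ^ n.factorization p
          ≤ ∏ p ∈ S, Y ^ n.factorization p := by
            apply Finset.prod_le_prod (fun i _ => by positivity)
            intro i hi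
            exact pow_le_pow_left₀ (Nat.cast_nonneg i)
              (not_lt.mp (Finset.mem_filter.mp hi).2) _
        _ = Y ^ (∑ p ∈ S, n.factorization p) := Finset.prod_pow_eq_pow_sum S _ Y
    have h2 : Y ^ (bigOmega n₁) = X ^ ((1 / L ^ 2) * (bigOmega n₁ : ℝ)) := by
      rw [Real.rpow_mul hX0.le, hYdef, Real.rpow_natCast]
    have h3 : X ^ ((1 / L ^ 2) * (bigOmega n₁ : ℝ)) ≤ X ^ (2 * (k:ℝ) / L) := by
      apply (Real.rpow_le_rpow_left_iff hX1).mpr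
      have h4 : (1 / L ^ 2) * (bigOmega n₁ : ℝ) ≤ (1 / L ^ 2) * (2 * k * L) :=
        mul_le_mul_of_nonneg_left hΩ1R (by positivity)
      have h5 : (1 / L ^ 2) * (2 * k * L) = 2 * (k:ℝ) / L := by
        field_simp
      linarith
    have hM : Mval k X = X ^ (2 * (k:ℝ) / L) := by unfold Mval; rw [← hLdef]
    rw [hM]
    calc (n₁ : ℝ) ≤ Y ^ (bigOmega n₁) := h1
      _ = X ^ ((1 / L ^ 2) * (bigOmega n₁ : ℝ)) := h2
      _ ≤ X ^ (2 * (k:ℝ) / L) := h3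
  -- divisor sum comparison
  have hsub : n₁.divisors ⊆ n.divisors.filter (fun m : ℕ => ((m : ℝ) ≤ Mval k X) ∧
      (bigOmega m : ℝ) ≤ (1 + ε') * k * L) := by
    intro m hm
    rw [Nat.mem_divisors] at hm
    have hmn₁ : m ∣ n₁ := hm.1
    have hmn : m ∣ n := hmn₁.trans ⟨n₂, by rw [← hsplit]; ring⟩
    refine Finset.mem_filter.mpr ⟨Nat.mem_divisors.mpr ⟨hmn, hn0⟩, ?_, ?_⟩
    · exact le_trans (Nat.cast_le.mpr (Nat.le_of_dvd hn₁pos hmn₁)) hn₁M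
    · calc (bigOmega m : ℝ) ≤ (bigOmega n₁ : ℝ) :=
            Nat.cast_le.mpr (bigOmega_le_of_dvd hn₁pos.ne' hmn₁)
        _ ≤ (bigOmega n : ℝ) := Nat.cast_le.mpr hΩ1n
        _ ≤ (1 + ε') * k * L := hΩn
  have hdkn₁ : (dk k n₁ : ℝ) = ∑ m ∈ n₁.divisors, (dk (k-1) m : ℝ) := by
    obtain ⟨j, hj⟩ : ∃ j, k = j + 1 := ⟨k - 1, by omega⟩
    rw [hj]
    simp only [Nat.add_sub_cancel]
    rw [show dk (j+1) n₁ = ∑ d ∈ n₁.divisors, dk j d from rfl]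
    push_cast
    rfl
  have hSsum : (dk k n₁ : ℝ) ≤ ∑ m ∈ n.divisors.filter (fun m : ℕ => ((m : ℝ) ≤ Mval k X) ∧
      (bigOmega m : ℝ) ≤ (1 + ε') * k * L), (dk (k-1) m : ℝ) := by
    rw [hdkn₁]
    exact Finset.sum_le_sum_of_subset_of_nonneg hsub (fun i _ _ => by positivity)
  -- rough part bound
  have hk0 : (0:ℝ) < (k:ℝ) := lt_trans one_pos hk1
  have h4 : (dk k n₂ : ℝ) ≤ (k:ℝ) ^ (bigOmega n₂) := by
    exact_mod_cast dk_le_pow_bigOmega k n₂ hn₂pos.ne'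
  have h5 : (k:ℝ) ^ (bigOmega n₂) ≤ L ^ (10 * Real.log k) := by
    rw [← Real.rpow_natCast (k:ℝ), Real.rpow_def_of_pos hk0, Real.rpow_def_of_pos hL0]
    apply Real.exp_le_exp.mpr
    nlinarith [hΩ2, hlogk.le, (Nat.cast_nonneg (bigOmega n₂) : (0:ℝ) ≤ (bigOmega n₂ : ℝ))]
  -- put together
  have hind : dtilde k ε' X n = ∑ m ∈ n.divisors.filter (fun m : ℕ => ((m : ℝ) ≤ Mval k X) ∧
      (bigOmega m : ℝ) ≤ (1 + ε') * k * L), (dk (k-1) m : ℝ) := by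
    rw [dtilde, if_pos ⟨hXn, hn2X⟩, one_mul, ← hLdef]
  rw [hind]
  calc (dk k n : ℝ) = (dk k n₂ : ℝ) * (dk k n₁ : ℝ) := by
        rw [← hsplit, dk_mul_coprime k hcop]; push_cast; ring
    _ ≤ L ^ (10 * Real.log k) * ∑ m ∈ n.divisors.filter (fun m : ℕ => ((m : ℝ) ≤ Mval k X) ∧
        (bigOmega m : ℝ) ≤ (1 + ε') * k * L), (dk (k-1) m : ℝ) := by
        apply mul_le_mul (h4.trans h5) hSsum (by positivity)
        exact (Real.rpow_nonneg hL0.le _)
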